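/- Let n ≥ 1 and let f be an n-th tropical meromorphic function on [−r, r] for some r > 0. Fix x ∈ (−r, r), let x < x₁ < ⋯ < x_ν < r be all points of (x, r) at which some one-sided j-th derivative of f (1 ≤ j ≤ n) fails to exist two-sidedly, and let −r < x_{−μ} < ⋯ < x_{−1} < x be the corresponding points of (−r, x). Then f(r) − f(x) = Σ_{j=1}^{n} ( (f^{(j)}(x⁺)/j!) (r−x)^j + Σ_{i=1}^{ν} τ_f^{(j)}(x_i) (r−x_i)^j ) and f(x) − f(−r) = Σ_{j=1}^{n} ( (−1)^{j+1} (f^{(j)}(x⁻)/j!) (r+x)^j + (−1)^j Σ_{i=1}^{μ} τ_f^{(j)}(x_{−i}) (r+x_{−i})^j ), where τ_f^{(j)}(y) = (f^{(j)}(y⁺) − f^{(j)}(y⁻))/j!. -/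
import Mathlib


open Filter MeasureTheory Asymptotics Polynomial
open scoped Classical

noncomputable section

namespace Trop

/-- sign from the right: `sgn(x⁺)` (equal to `sgn x` for `x ≠ 0`, and `+1` at `0`). -/
def sgnR (x : ℝ) : ℝ := if x < 0 then -1 else 1

/-- sign from the left: `sgn(x⁻)` (equal to `sgn x` for `x ≠ 0`, and `-1` at `0`). -/
def sgnL (x : ℝ) : ℝ := if 0 < x then 1 else -1

/-- `p` is the polynomial piece of `f` immediately to the right of `x`. -/
def IsRightPiece (f : ℝ → ℝ) (x : ℝ) (p : Polynomial ℝ) : Prop :=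
  ∃ ε > (0 : ℝ), ∀ y ∈ Set.Ico x (x + ε), f y = p.eval y

/-- `p` is the polynomial piece of `f` immediately to the left of `x`. -/
def IsLeftPiece (f : ℝ → ℝ) (x : ℝ) (p : Polynomial ℝ) : Prop :=
  ∃ ε > (0 : ℝ), ∀ y ∈ Set.Ioc (x - ε) x, f y = p.eval y

/-- The right polynomial piece of `f` at `x` (junk value `0` if none exists). -/
def rightPoly (f : ℝ → ℝ) (x : ℝ) : Polynomial ℝ :=
  if h : ∃ p, IsRightPiece f x p then h.choose else 0

/-- The left polynomial piece of `f` at `x` (junk value `0` if none exists). -/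
def leftPoly (f : ℝ → ℝ) (x : ℝ) : Polynomial ℝ :=
  if h : ∃ p, IsLeftPiece f x p then h.choose else 0

/-- The one-sided `j`-th derivative `f^{(j)}(x⁺)` from the right. -/
def rderiv (f : ℝ → ℝ) (j : ℕ) (x : ℝ) : ℝ :=
  ((fun q : Polynomial ℝ => Polynomial.derivative q)^[j] (rightPoly f x)).eval x

/-- The one-sided `j`-th derivative `f^{(j)}(x⁻)` from the left. -/
def lderiv (f : ℝ → ℝ) (j : ℕ) (x : ℝ) : ℝ :=
  ((fun q : Polynomial ℝ => Polynomial.derivative q)^[j] (leftPoly f x)).eval x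

/-- `ω_f^{(j)}(x) = (sgn^{j+1}(x⁺) f^{(j)}(x⁺) − sgn^{j+1}(x⁻) f^{(j)}(x⁻))/j!`. -/
def omega (f : ℝ → ℝ) (j : ℕ) (x : ℝ) : ℝ :=
  (sgnR x ^ (j + 1) * rderiv f j x - sgnL x ^ (j + 1) * lderiv f j x) / (Nat.factorial j : ℝ)

/-- `τ_f^{(j)}(x) = (f^{(j)}(x⁺) − f^{(j)}(x⁻))/j!`. -/
def tau (f : ℝ → ℝ) (j : ℕ) (x : ℝ) : ℝ :=
  (rderiv f j x - lderiv f j x) / (Nat.factorial j : ℝ)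

/-- A continuous piecewise polynomial function: there is a strictly increasing doubly infinite
sequence of breakpoints with no finite accumulation point, on each segment `f` agrees with a
polynomial of degree at most `n`, and the supremum of the degrees of the pieces equals `n`. -/
def IsNthPiecewisePoly (n : ℕ) (f : ℝ → ℝ) : Prop :=
  Continuous f ∧
  ∃ (x : ℤ → ℝ) (p : ℤ → Polynomial ℝ),
    StrictMono x ∧
    Tendsto x atTop atTop ∧ Tendsto x atBot atBot ∧
    (∀ i : ℤ, ∀ y ∈ Set.Icc (x (i - 1)) (x i), f y = (p i).eval y) ∧
    (∀ i : ℤ, (p i).natDegree ≤ n) ∧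
    (∃ i : ℤ, (p i).natDegree = n)

/-- `f` has no `j`-th poles for any `j ≥ 1`. -/
def NoPoles (f : ℝ → ℝ) : Prop := ∀ j : ℕ, 1 ≤ j → ∀ x : ℝ, 0 ≤ omega f j x

/-- `f` has no `j`-th roots for any `j ≥ 1`. -/
def NoRoots (f : ℝ → ℝ) : Prop := ∀ j : ℕ, 1 ≤ j → ∀ x : ℝ, omega f j x ≤ 0

/-- An `n`-th tropical meromorphic function. -/
def IsTropicalMeromorphic (n : ℕ) (f : ℝ → ℝ) : Prop :=
  IsNthPiecewisePoly n f ∧ ¬ ∃ c : ℝ, ∀ x : ℝ, f x = c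

/-- An `n`-th tropical entire function (no poles; constants allowed when `n = 0`). -/
def IsTropicalEntire (n : ℕ) (f : ℝ → ℝ) : Prop :=
  IsNthPiecewisePoly n f ∧ NoPoles f

/-- The `n`-th max-plus proximity function `m(r, f)`. -/
def mProx (r : ℝ) (f : ℝ → ℝ) : ℝ := (max (f r) 0 + max (f (-r)) 0) / 2

/-- The `j`-th integrated max-plus counting function of poles,
`N^{(j)}(r, f) = (1/2) Σ_z |ω_f^{(j)}(z)| (r − |z|)^j` over the `j`-th poles `z` in `(−r, r)`. -/
def Npole (j : ℕ) (r : ℝ) (f : ℝ → ℝ) : ℝ :=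
  (1 / 2) * ∑' z : {z : ℝ // z ∈ Set.Ioo (-r) r ∧ omega f j z < 0},
    |omega f j z.1| * (r - |z.1|) ^ j

/-- The `j`-th integrated counting function of roots, `N^{(j)}(r, 1₀ ⊘ f)`. -/
def Nroot (j : ℕ) (r : ℝ) (f : ℝ → ℝ) : ℝ :=
  (1 / 2) * ∑' z : {z : ℝ // z ∈ Set.Ioo (-r) r ∧ 0 < omega f j z},
    |omega f j z.1| * (r - |z.1|) ^ j

/-- Partial pole-counting function restricted to a set `I`. -/
def NpoleIn (j : ℕ) (r : ℝ) (I : Set ℝ) (f : ℝ → ℝ) : ℝ :=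
  (1 / 2) * ∑' z : {z : ℝ // z ∈ I ∧ omega f j z < 0},
    |omega f j z.1| * (r - |z.1|) ^ j

/-- Partial root-counting function restricted to a set `I`. -/
def NrootIn (j : ℕ) (r : ℝ) (I : Set ℝ) (f : ℝ → ℝ) : ℝ :=
  (1 / 2) * ∑' z : {z : ℝ // z ∈ I ∧ 0 < omega f j z},
    |omega f j z.1| * (r - |z.1|) ^ j

/-- The `n`-th max-plus characteristic function `T(r, f)`. -/
def Tchar (n : ℕ) (r : ℝ) (f : ℝ → ℝ) : ℝ :=
  mProx r f + ∑ j ∈ Finset.Icc 1 n, Npole j r f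

/-- The hyper-order `ρ₂(f) = limsup_{r→∞} log log T(r,f) / log r`. -/
def hyperOrder (n : ℕ) (f : ℝ → ℝ) : ℝ :=
  Filter.limsup (fun r : ℝ => Real.log (Real.log (Tchar n r f)) / Real.log r) Filter.atTop

/-- `E ⊆ (1, ∞)` has finite logarithmic measure: `∫_E dt/t < ∞`. -/
def FiniteLogMeasure (E : Set ℝ) : Prop :=
  E ⊆ Set.Ioi 1 ∧ (∫⁻ t in E, ENNReal.ofReal (1 / t)) < ⊤

/-- A well defined polynomial: apart from the constant term, only the coefficients whose index
has the same parity as the degree survive, and they all have the same sign. -/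
def WellDefinedPoly (p : Polynomial ℝ) : Prop :=
  (∀ k : ℕ, 1 ≤ k → k % 2 ≠ p.natDegree % 2 → p.coeff k = 0) ∧
  ((∀ k : ℕ, 1 ≤ k → 0 ≤ p.coeff k) ∨ (∀ k : ℕ, 1 ≤ k → p.coeff k ≤ 0))

/-- A piecewise polynomial function is well defined if all its polynomial pieces are. -/
def WellDefinedFn (f : ℝ → ℝ) : Prop :=
  ∀ x : ℝ, WellDefinedPoly (rightPoly f x) ∧ WellDefinedPoly (leftPoly f x)

/-- The pointwise maximum of the components of a representation of a tropical holomorphic curve. -/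
def Fmax {m : ℕ} (f : Fin (m + 1) → ℝ → ℝ) (x : ℝ) : ℝ := ⨆ i, f i x

/-- The tropical Cartan characteristic function of the curve represented by `f`. -/
def TCartan {m : ℕ} (f : Fin (m + 1) → ℝ → ℝ) (r : ℝ) : ℝ :=
  (Fmax f r + Fmax f (-r)) / 2 - Fmax f 0

/-- `f` is a representation of an `n`-th tropical holomorphic curve `ℝ → TP^m`:
each component is an `n_i`-th tropical entire function and `max_i n_i = n`. -/
def IsHoloCurveRep (n : ℕ) {m : ℕ} (f : Fin (m + 1) → ℝ → ℝ) : Prop :=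
  ∃ d : Fin (m + 1) → ℕ, (∀ i, IsTropicalEntire (d i) (f i)) ∧ Finset.univ.sup d = n

/-- A reduced representation: the components have no common `j`-th roots. -/
def ReducedRep {m : ℕ} (f : Fin (m + 1) → ℝ → ℝ) : Prop :=
  ¬ ∃ (j : ℕ) (x : ℝ), 1 ≤ j ∧ ∀ i, 0 < omega (f i) j x

/-- Two representations define the same curve in `TP^m`: pointwise they differ by a scalar. -/
def SameCurve {m : ℕ} (f g : Fin (m + 1) → ℝ → ℝ) : Prop :=
  ∀ x : ℝ, ∃ lam : ℝ, ∀ i, f i x = g i x + lam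

/-- The curve represented by `f` is non-constant. -/
def NonConstantCurve {m : ℕ} (f : Fin (m + 1) → ℝ → ℝ) : Prop :=
  ¬ ∀ x y : ℝ, ∃ lam : ℝ, ∀ i, f i x = f i y + lam

/-- The tropical Casoratian `C₀(f₀, …, f_m)(x) = max_σ Σ_i f_i(x + σ(i))`. -/
def Casoratian {m : ℕ} (f : Fin (m + 1) → ℝ → ℝ) (x : ℝ) : ℝ :=
  ⨆ σ : Equiv.Perm (Fin (m + 1)), ∑ i, f i (x + ((σ i : ℕ) : ℝ))

end Trop

end



section AuxLemmas
open Trop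

open Trop

lemma agree_infinite {f : ℝ → ℝ} {p q : ℝ[X]} {s : Set ℝ}
    (hs : s.Infinite) (hp : ∀ y ∈ s, f y = p.eval y) (hq : ∀ y ∈ s, f y = q.eval y) : p = q :=
  Polynomial.eq_of_infinite_eval_eq p q (hs.mono fun y hy => by
    simp only [Set.mem_setOf_eq, ← hp y hy, ← hq y hy])

lemma rightPoly_spec {f : ℝ → ℝ} {x : ℝ} {p : ℝ[X]} (h : IsRightPiece f x p) :
    rightPoly f x = p := by
  have hex : ∃ q, IsRightPiece f x q := ⟨p, h⟩
  rw [rightPoly, dif_pos hex]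
  obtain ⟨ε₁, hε₁, h₁⟩ := hex.choose_spec
  obtain ⟨ε₂, hε₂, h₂⟩ := h
  refine agree_infinite (f := f) (s := Set.Ico x (x + min ε₁ ε₂))
    (Set.Ico_infinite (by simp [lt_min hε₁ hε₂, hε₁, hε₂])) ?_ ?_
  · exact fun y hy => h₁ y ⟨hy.1, lt_of_lt_of_le hy.2 (by simp)⟩
  · exact fun y hy => h₂ y ⟨hy.1, lt_of_lt_of_le hy.2 (by simp)⟩

lemma leftPoly_spec {f : ℝ → ℝ} {x : ℝ} {p : ℝ[X]} (h : IsLeftPiece f x p) :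
    leftPoly f x = p := by
  have hex : ∃ q, IsLeftPiece f x q := ⟨p, h⟩
  rw [leftPoly, dif_pos hex]
  obtain ⟨ε₁, hε₁, h₁⟩ := hex.choose_spec
  obtain ⟨ε₂, hε₂, h₂⟩ := h
  refine agree_infinite (f := f) (s := Set.Ioc (x - min ε₁ ε₂) x)
    (Set.Ioc_infinite (by simp [lt_min hε₁ hε₂, hε₁, hε₂])) ?_ ?_
  · exact fun y hy => h₁ y ⟨lt_of_le_of_lt (sub_le_sub_left (min_le_left _ _) x) hy.1, hy.2⟩
  · exact fun y hy => h₂ y ⟨lt_of_le_of_lt (sub_le_sub_left (min_le_right _ _) x) hy.1, hy.2⟩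

lemma taylor_expand {n : ℕ} {p : ℝ[X]} (hpn : p.natDegree ≤ n) (y t : ℝ) :
    p.eval t = ∑ j ∈ Finset.range (n+1),
      ((fun q : ℝ[X] => derivative q)^[j] p).eval y / (Nat.factorial j : ℝ) * (t - y) ^ j := by
  have h1 : p.eval t = (taylor y p).eval (t - y) := by
    rw [taylor_eval]; norm_num
  rw [h1, eval_eq_sum_range' (lt_of_le_of_lt (by rw [natDegree_taylor]; exact hpn)
    (Nat.lt_succ_self n))]
  refine Finset.sum_congr rfl fun j _ => ?_
  rw [taylor_coeff]
  have h2 : ((fun q : ℝ[X] => derivative q)^[j] p) = (Nat.factorial j : ℕ) • (hasseDeriv j p) := by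
    have := congrFun (Polynomial.factorial_smul_hasseDeriv (R := ℝ) j) p
    simpa using this.symm
  rw [h2]
  have : ((Nat.factorial j : ℕ) • hasseDeriv j p).eval y
      = (Nat.factorial j : ℝ) * (hasseDeriv j p).eval y := by
    simp [nsmul_eq_mul]
  rw [this]
  have hj : (Nat.factorial j : ℝ) ≠ 0 := Nat.cast_ne_zero.mpr (Nat.factorial_ne_zero j)
  field_simp

lemma range_eq_insert_Icc (n : ℕ) : Finset.range (n+1) = insert 0 (Finset.Icc 1 n) := by
  ext j; simp [Finset.mem_range, Finset.mem_Icc]; omega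

lemma jump_eval {n : ℕ} {f : ℝ → ℝ} {p q : ℝ[X]} {y : ℝ}
    (hp : IsLeftPiece f y p) (hq : IsRightPiece f y q)
    (hpn : p.natDegree ≤ n) (hqn : q.natDegree ≤ n) (t : ℝ) :
    q.eval t - p.eval t = ∑ j ∈ Finset.Icc 1 n, tau f j y * (t - y) ^ j := by
  have hL := leftPoly_spec hp
  have hR := rightPoly_spec hq
  have hpe : f y = p.eval y := by
    obtain ⟨ε, hε, h⟩ := hp; exact h y ⟨by linarith, le_refl y⟩
  have hqe : f y = q.eval y := by
    obtain ⟨ε, hε, h⟩ := hq; exact h y ⟨le_refl y, by linarith⟩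
  have htau : ∀ j, tau f j y =
      (((fun q : ℝ[X] => derivative q)^[j] q).eval y
        - ((fun q : ℝ[X] => derivative q)^[j] p).eval y) / (Nat.factorial j : ℝ) := by
    intro j; rw [tau, rderiv, lderiv, hL, hR]
  rw [taylor_expand hqn y t, taylor_expand hpn y t, range_eq_insert_Icc,
    Finset.sum_insert (by simp), Finset.sum_insert (by simp)]
  have h0 : ((fun q : ℝ[X] => derivative q)^[0] q).eval y / (Nat.factorial 0 : ℝ) * (t - y) ^ 0
      = ((fun q : ℝ[X] => derivative q)^[0] p).eval y / (Nat.factorial 0 : ℝ) * (t - y) ^ 0 := by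
    simp [← hpe, ← hqe]
  have hterm : ∀ j ∈ Finset.Icc 1 n,
      ((fun q : ℝ[X] => derivative q)^[j] q).eval y / (Nat.factorial j : ℝ) * (t - y) ^ j
        - ((fun q : ℝ[X] => derivative q)^[j] p).eval y / (Nat.factorial j : ℝ) * (t - y) ^ j
      = tau f j y * (t - y) ^ j := by
    intro j _; rw [htau j]; ring
  have key : (∑ j ∈ Finset.Icc 1 n,
        ((fun q : ℝ[X] => derivative q)^[j] q).eval y / (Nat.factorial j : ℝ) * (t - y) ^ j)
      - (∑ j ∈ Finset.Icc 1 n,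
        ((fun q : ℝ[X] => derivative q)^[j] p).eval y / (Nat.factorial j : ℝ) * (t - y) ^ j)
      = ∑ j ∈ Finset.Icc 1 n, tau f j y * (t - y) ^ j := by
    rw [← Finset.sum_sub_distrib]; exact Finset.sum_congr rfl hterm
  linarith [key, h0]

lemma tau_zero {f : ℝ → ℝ} {p : ℝ[X]} {y : ℝ}
    (hp : IsLeftPiece f y p) (hq : IsRightPiece f y p) (j : ℕ) : tau f j y = 0 := by
  rw [tau, rderiv, lderiv, leftPoly_spec hp, rightPoly_spec hq, sub_self, zero_div]

lemma telescope (g : ℤ → ℝ) (k : ℤ) : ∀ m : ℤ, k ≤ m →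
    ∑ i ∈ Finset.Icc k (m-1), (g (i+1) - g i) = g m - g k := by
  refine Int.le_induction ?_ ?_
  · have : Finset.Icc k (k-1) = ∅ := by
      apply Finset.Icc_eq_empty; omega
    simp [this]
  · intro m hm ih
    have hset : Finset.Icc k (m+1-1) = insert m (Finset.Icc k (m-1)) := by
      ext i; simp [Finset.mem_Icc]; omega
    rw [hset, Finset.sum_insert (by simp [Finset.mem_Icc]), ih]
    ring


lemma core_right {n : ℕ} {f : ℝ → ℝ} (hf : IsNthPiecewisePoly n f) {c d : ℝ} (hcd : c < d) :
    ∃ s : Finset ℝ, (↑s ⊆ Set.Ioo c d) ∧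
      (∀ y ∈ Set.Ioo c d, y ∉ s → ∀ j, tau f j y = 0) ∧
      f d - f c = (∑ j ∈ Finset.Icc 1 n,
          rderiv f j c / (Nat.factorial j : ℝ) * (d - c) ^ j)
        + ∑ y ∈ s, ∑ j ∈ Finset.Icc 1 n, tau f j y * (d - y) ^ j := by
  obtain ⟨hcont, xs, p, hmono, htop, hbot, hpiece, hdeg, -⟩ := hf
  obtain ⟨k, hk1, hk2⟩ := Int.exists_least_of_bdd (P := fun i => c < xs i)
    (by obtain ⟨i0, hi0⟩ := (hbot.eventually (eventually_le_atBot c)).exists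
        exact ⟨i0, fun z hz => le_of_lt (hmono.lt_iff_lt.mp (lt_of_le_of_lt hi0 hz))⟩)
    ((htop.eventually (eventually_gt_atTop c)).exists)
  obtain ⟨m, hm1, hm2⟩ := Int.exists_least_of_bdd (P := fun i => d ≤ xs i)
    (by obtain ⟨i0, hi0⟩ := (hbot.eventually (eventually_lt_atBot d)).exists
        exact ⟨i0, fun z hz => le_of_lt (hmono.lt_iff_lt.mp (lt_of_lt_of_le hi0 hz))⟩)
    ((htop.eventually (eventually_ge_atTop d)).exists)
  have hxk1 : xs (k-1) ≤ c := by
    by_contra h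
    have := hk2 (k-1) (lt_of_not_ge h); omega
  have hxm1 : xs (m-1) < d := by
    by_contra h
    have := hm2 (m-1) (le_of_not_gt h); omega
  have hkm : k ≤ m := by
    by_contra h
    push_neg at h
    have : xs m ≤ xs (k-1) := hmono.monotone (by omega)
    linarith
  have hfc : f c = (p k).eval c := hpiece k c ⟨hxk1, hk1.le⟩
  have hfd : f d = (p m).eval d := hpiece m d ⟨hxm1.le, hm1⟩
  have hRk : IsRightPiece f c (p k) :=
    ⟨xs k - c, by linarith, fun y hy => hpiece k y ⟨le_trans hxk1 hy.1, by linarith [hy.2]⟩⟩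
  have hLpiece : ∀ i : ℤ, IsLeftPiece f (xs i) (p i) := fun i =>
    ⟨xs i - xs (i-1), by linarith [hmono (show i - 1 < i by omega)],
      fun y hy => hpiece i y ⟨by linarith [hy.1], hy.2⟩⟩
  have hRpiece : ∀ i : ℤ, IsRightPiece f (xs i) (p (i+1)) := fun i =>
    ⟨xs (i+1) - xs i, by linarith [hmono (show i < i + 1 by omega)],
      fun y hy => hpiece (i+1) y ⟨by simpa using hy.1, by linarith [hy.2]⟩⟩
  refine ⟨(Finset.Icc k (m-1)).image xs, ?_, ?_, ?_⟩
  · intro y hy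
    simp only [Finset.coe_image, Set.mem_image, Finset.mem_coe, Finset.mem_Icc] at hy
    obtain ⟨i, ⟨hik, him⟩, rfl⟩ := hy
    exact ⟨lt_of_lt_of_le hk1 (hmono.monotone hik),
      lt_of_le_of_lt (hmono.monotone him) hxm1⟩
  · intro y hy hys j
    obtain ⟨i, hi1, hi2⟩ := Int.exists_least_of_bdd (P := fun i => y < xs i)
      (⟨k, fun z hz => hk2 z (lt_trans hy.1 hz)⟩)
      (⟨m, lt_of_lt_of_le hy.2 hm1⟩)
    have hik : k ≤ i := hk2 i (lt_trans hy.1 hi1)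
    have him : i ≤ m := hi2 m (lt_of_lt_of_le hy.2 hm1)
    have hxi1 : xs (i-1) ≤ y := by
      by_contra h
      have := hi2 (i-1) (lt_of_not_ge h); omega
    have hne : xs (i-1) ≠ y := by
      intro h
      apply hys
      simp only [Finset.mem_image, Finset.mem_Icc]
      refine ⟨i-1, ⟨?_, by omega⟩, h⟩
      have := hk2 (i-1) (h ▸ hy.1); omega
    have hlt : xs (i-1) < y := lt_of_le_of_ne hxi1 hne
    exact tau_zero
      ⟨y - xs (i-1), by linarith, fun z hz => hpiece i z ⟨by linarith [hz.1], le_trans hz.2 hi1.le⟩⟩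
      ⟨xs i - y, by linarith, fun z hz => hpiece i z ⟨le_trans hlt.le hz.1, by linarith [hz.2]⟩⟩ j
  · have hjump : ∀ i ∈ Finset.Icc k (m-1),
        (p (i+1)).eval d - (p i).eval d = ∑ j ∈ Finset.Icc 1 n, tau f j (xs i) * (d - xs i) ^ j :=
      fun i _ => jump_eval (hLpiece i) (hRpiece i) (hdeg i) (hdeg (i+1)) d
    have htel : ∑ i ∈ Finset.Icc k (m-1), ((p (i+1)).eval d - (p i).eval d)
        = (p m).eval d - (p k).eval d := telescope (fun i => (p i).eval d) k m hkm
    have himg : ∑ y ∈ (Finset.Icc k (m-1)).image xs,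
          ∑ j ∈ Finset.Icc 1 n, tau f j y * (d - y) ^ j
        = ∑ i ∈ Finset.Icc k (m-1), ∑ j ∈ Finset.Icc 1 n, tau f j (xs i) * (d - xs i) ^ j :=
      Finset.sum_image (fun a _ b _ h => hmono.injective h)
    have htay : (p k).eval d = f c + ∑ j ∈ Finset.Icc 1 n,
        rderiv f j c / (Nat.factorial j : ℝ) * (d - c) ^ j := by
      rw [taylor_expand (hdeg k) c d, range_eq_insert_Icc, Finset.sum_insert (by simp)]
      have : ∀ j ∈ Finset.Icc 1 n,
          ((fun q : ℝ[X] => derivative q)^[j] (p k)).eval c / (Nat.factorial j : ℝ) * (d - c) ^ j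
          = rderiv f j c / (Nat.factorial j : ℝ) * (d - c) ^ j := by
        intro j _; rw [rderiv, rightPoly_spec hRk]
      rw [Finset.sum_congr rfl this]
      simp [hfc]
    rw [himg, Finset.sum_congr rfl fun i hi => (hjump i hi).symm, htel, hfd, hfc]
    rw [hfc] at htay
    linarith [htay]

lemma core_left {n : ℕ} {f : ℝ → ℝ} (hf : IsNthPiecewisePoly n f) {e c : ℝ} (hec : e < c) :
    ∃ s : Finset ℝ, (↑s ⊆ Set.Ioo e c) ∧
      (∀ y ∈ Set.Ioo e c, y ∉ s → ∀ j, tau f j y = 0) ∧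
      f c - f e = -(∑ j ∈ Finset.Icc 1 n,
          lderiv f j c / (Nat.factorial j : ℝ) * (e - c) ^ j)
        + ∑ y ∈ s, ∑ j ∈ Finset.Icc 1 n, tau f j y * (e - y) ^ j := by
  obtain ⟨hcont, xs, p, hmono, htop, hbot, hpiece, hdeg, -⟩ := hf
  obtain ⟨l, hl1, hl2⟩ := Int.exists_least_of_bdd (P := fun i => c ≤ xs i)
    (by obtain ⟨i0, hi0⟩ := (hbot.eventually (eventually_lt_atBot c)).exists
        exact ⟨i0, fun z hz => le_of_lt (hmono.lt_iff_lt.mp (lt_of_lt_of_le hi0 hz))⟩)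
    ((htop.eventually (eventually_ge_atTop c)).exists)
  obtain ⟨m, hm1, hm2⟩ := Int.exists_least_of_bdd (P := fun i => e < xs i)
    (by obtain ⟨i0, hi0⟩ := (hbot.eventually (eventually_le_atBot e)).exists
        exact ⟨i0, fun z hz => le_of_lt (hmono.lt_iff_lt.mp (lt_of_le_of_lt hi0 hz))⟩)
    ((htop.eventually (eventually_gt_atTop e)).exists)
  have hxl1 : xs (l-1) < c := by
    by_contra h
    have := hl2 (l-1) (le_of_not_gt h); omega
  have hxm1 : xs (m-1) ≤ e := by
    by_contra h
    have := hm2 (m-1) (lt_of_not_ge h); omega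
  have hml : m ≤ l := by
    by_contra h
    push_neg at h
    have : xs l ≤ xs (m-1) := hmono.monotone (by omega)
    linarith
  have hfc : f c = (p l).eval c := hpiece l c ⟨hxl1.le, hl1⟩
  have hfe : f e = (p m).eval e := hpiece m e ⟨hxm1, hm1.le⟩
  have hLc : IsLeftPiece f c (p l) :=
    ⟨c - xs (l-1), by linarith, fun y hy => hpiece l y ⟨by linarith [hy.1], le_trans hy.2 hl1⟩⟩
  have hLpiece : ∀ i : ℤ, IsLeftPiece f (xs i) (p i) := fun i =>
    ⟨xs i - xs (i-1), by linarith [hmono (show i - 1 < i by omega)],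
      fun y hy => hpiece i y ⟨by linarith [hy.1], hy.2⟩⟩
  have hRpiece : ∀ i : ℤ, IsRightPiece f (xs i) (p (i+1)) := fun i =>
    ⟨xs (i+1) - xs i, by linarith [hmono (show i < i + 1 by omega)],
      fun y hy => hpiece (i+1) y ⟨by simpa using hy.1, by linarith [hy.2]⟩⟩
  refine ⟨(Finset.Icc m (l-1)).image xs, ?_, ?_, ?_⟩
  · intro y hy
    simp only [Finset.coe_image, Set.mem_image, Finset.mem_coe, Finset.mem_Icc] at hy
    obtain ⟨i, ⟨him, hil⟩, rfl⟩ := hy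
    exact ⟨lt_of_lt_of_le hm1 (hmono.monotone him),
      lt_of_le_of_lt (hmono.monotone hil) hxl1⟩
  · intro y hy hys j
    obtain ⟨i, hi1, hi2⟩ := Int.exists_least_of_bdd (P := fun i => y < xs i)
      (⟨m, fun z hz => hm2 z (lt_trans hy.1 hz)⟩)
      (⟨l, lt_of_lt_of_le hy.2 hl1⟩)
    have him : m ≤ i := hm2 i (lt_trans hy.1 hi1)
    have hil : i ≤ l := hi2 l (lt_of_lt_of_le hy.2 hl1)
    have hxi1 : xs (i-1) ≤ y := by
      by_contra h
      have := hi2 (i-1) (lt_of_not_ge h); omega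
    have hne : xs (i-1) ≠ y := by
      intro h
      apply hys
      simp only [Finset.mem_image, Finset.mem_Icc]
      refine ⟨i-1, ⟨?_, by omega⟩, h⟩
      have := hm2 (i-1) (h ▸ hy.1); omega
    have hlt : xs (i-1) < y := lt_of_le_of_ne hxi1 hne
    exact tau_zero
      ⟨y - xs (i-1), by linarith, fun z hz => hpiece i z ⟨by linarith [hz.1], le_trans hz.2 hi1.le⟩⟩
      ⟨xs i - y, by linarith, fun z hz => hpiece i z ⟨le_trans hlt.le hz.1, by linarith [hz.2]⟩⟩ j
  · have hjump : ∀ i ∈ Finset.Icc m (l-1),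
        (p (i+1)).eval e - (p i).eval e = ∑ j ∈ Finset.Icc 1 n, tau f j (xs i) * (e - xs i) ^ j :=
      fun i _ => jump_eval (hLpiece i) (hRpiece i) (hdeg i) (hdeg (i+1)) e
    have htel : ∑ i ∈ Finset.Icc m (l-1), ((p (i+1)).eval e - (p i).eval e)
        = (p l).eval e - (p m).eval e := telescope (fun i => (p i).eval e) m l hml
    have himg : ∑ y ∈ (Finset.Icc m (l-1)).image xs,
          ∑ j ∈ Finset.Icc 1 n, tau f j y * (e - y) ^ j
        = ∑ i ∈ Finset.Icc m (l-1), ∑ j ∈ Finset.Icc 1 n, tau f j (xs i) * (e - xs i) ^ j :=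
      Finset.sum_image (fun a _ b _ h => hmono.injective h)
    have htay : (p l).eval e = f c + ∑ j ∈ Finset.Icc 1 n,
        lderiv f j c / (Nat.factorial j : ℝ) * (e - c) ^ j := by
      rw [taylor_expand (hdeg l) c e, range_eq_insert_Icc, Finset.sum_insert (by simp)]
      have : ∀ j ∈ Finset.Icc 1 n,
          ((fun q : ℝ[X] => derivative q)^[j] (p l)).eval c / (Nat.factorial j : ℝ) * (e - c) ^ j
          = lderiv f j c / (Nat.factorial j : ℝ) * (e - c) ^ j := by
        intro j _; rw [lderiv, leftPoly_spec hLc]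
      rw [Finset.sum_congr rfl this]
      simp [hfc]
    rw [himg, Finset.sum_congr rfl fun i hi => (hjump i hi).symm, htel, hfe, hfc]
    rw [hfc] at htay
    linarith [htay]

lemma sum_match {ν n : ℕ} {f : ℝ → ℝ} {c d : ℝ} (a : Fin ν → ℝ) (hinj : Function.Injective a)
    (s : Finset ℝ) (hs : ↑s ⊆ Set.Ioo c d)
    (hvan : ∀ y ∈ Set.Ioo c d, y ∉ s → ∀ j, tau f j y = 0)
    (haR : ∀ i, a i ∈ Set.Ioo c d)
    (haAll : ∀ y ∈ Set.Ioo c d, ((∃ j : ℕ, 1 ≤ j ∧ j ≤ n ∧ tau f j y ≠ 0) ↔ ∃ i, a i = y))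
    (F : ℝ → ℕ → ℝ) :
    ∑ y ∈ s, ∑ j ∈ Finset.Icc 1 n, tau f j y * F y j
      = ∑ i : Fin ν, ∑ j ∈ Finset.Icc 1 n, tau f j (a i) * F (a i) j := by
  classical
  have hAs : Finset.univ.image a ⊆ s := by
    intro y hy
    simp only [Finset.mem_image, Finset.mem_univ, true_and] at hy
    obtain ⟨i, rfl⟩ := hy
    by_contra hys
    obtain ⟨j, _, _, hj3⟩ := (haAll _ (haR i)).mpr ⟨i, rfl⟩
    exact hj3 (hvan _ (haR i) hys j)
  rw [← Finset.sum_subset hAs, Finset.sum_image (fun p _ q _ h => hinj h)]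
  intro y hy hyA
  refine Finset.sum_eq_zero fun j hj => ?_
  simp only [Finset.mem_Icc] at hj
  have hyIoo : y ∈ Set.Ioo c d := hs hy
  have : ¬ ∃ i, a i = y := by
    intro ⟨i, hi⟩
    exact hyA (Finset.mem_image.mpr ⟨i, Finset.mem_univ i, hi⟩)
  have := (haAll y hyIoo).not.mpr this
  push_neg at this
  rw [this j hj.1 hj.2, zero_mul]


end AuxLemmas

/-- Lemma 3.1: one-sided Taylor-type expansions of an `n`-th tropical
meromorphic function over `[−r, r]`, with jump corrections `τ_f^{(j)}` at the points where
some one-sided `j`-th derivative fails to exist two-sidedly. -/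
theorem statement2 (n : ℕ) (hn : 1 ≤ n) (r : ℝ) (hr : 0 < r) (f : ℝ → ℝ)
    (hf : Trop.IsTropicalMeromorphic n f)
    (x : ℝ) (hx : x ∈ Set.Ioo (-r) r)
    (ν μ : ℕ) (a : Fin ν → ℝ) (b : Fin μ → ℝ)
    (ha : StrictMono a) (hb : StrictMono b)
    (haR : ∀ i, a i ∈ Set.Ioo x r) (hbR : ∀ i, b i ∈ Set.Ioo (-r) x)
    (haAll : ∀ y ∈ Set.Ioo x r,
      ((∃ j : ℕ, 1 ≤ j ∧ j ≤ n ∧ Trop.tau f j y ≠ 0) ↔ ∃ i, a i = y))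
    (hbAll : ∀ y ∈ Set.Ioo (-r) x,
      ((∃ j : ℕ, 1 ≤ j ∧ j ≤ n ∧ Trop.tau f j y ≠ 0) ↔ ∃ i, b i = y)) :
    (f r - f x = ∑ j ∈ Finset.Icc 1 n,
      ((Trop.rderiv f j x / (Nat.factorial j : ℝ)) * (r - x) ^ j
        + ∑ i, Trop.tau f j (a i) * (r - a i) ^ j)) ∧
    (f x - f (-r) = ∑ j ∈ Finset.Icc 1 n,
      ((-1 : ℝ) ^ (j + 1) * (Trop.lderiv f j x / (Nat.factorial j : ℝ)) * (r + x) ^ j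
        + (-1 : ℝ) ^ j * ∑ i, Trop.tau f j (b i) * (r + b i) ^ j)) := by
  obtain ⟨hpw, -⟩ := hf
  constructor
  · obtain ⟨s, hs1, hs2, hs3⟩ := core_right hpw hx.2
    rw [hs3, sum_match a ha.injective s hs1 hs2 haR haAll (fun y j => (r - y) ^ j),
      Finset.sum_add_distrib]
    congr 1
    exact Finset.sum_comm
  · obtain ⟨s, hs1, hs2, hs3⟩ := core_left hpw hx.1
    rw [hs3, sum_match b hb.injective s hs1 hs2 hbR hbAll (fun y j => (-r - y) ^ j),
      Finset.sum_add_distrib]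
    congr 1
    · rw [neg_eq_iff_eq_neg, ← Finset.sum_neg_distrib]
      refine Finset.sum_congr rfl fun j _ => ?_
      have h1 : (-r - x : ℝ) = -(r + x) := by ring
      rw [h1, neg_pow]; ring
    · rw [Finset.sum_comm]
      refine Finset.sum_congr rfl fun j _ => ?_
      rw [Finset.mul_sum]
      refine Finset.sum_congr rfl fun i _ => ?_
      have h1 : (-r - b i : ℝ) = -(r + b i) := by ring
      rw [h1, neg_pow]; ring
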